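/- Let W be a finite subgroup of GL(V) for a 4-dimensional complex vector space V, and suppose s, s' ∈ W are reflections (i.e., fix a hyperplane pointwise) with det(s)·Λ²s = det(s')·Λ²s' as automorphisms of Λ²V. Then s = s'. -/

import Mathlib

open ExteriorAlgebra Module

theorem map_mem_exteriorPower {V : Type*} [AddCommGroup V] [Module ℂ V]
    (f : V →ₗ[ℂ] V) (n : ℕ) {x : ExteriorAlgebra ℂ V}
    (hx : x ∈ ⋀[ℂ]^n V) : ExteriorAlgebra.map f x ∈ ⋀[ℂ]^n V := by
  have h : Submodule.map (ExteriorAlgebra.map f).toLinearMap (⋀[ℂ]^n V) ≤ ⋀[ℂ]^n V := by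
    rw [show (⋀[ℂ]^n V) = (LinearMap.range (ι ℂ : V →ₗ[ℂ] ExteriorAlgebra ℂ V)) ^ n from rfl,
      Submodule.map_pow, ι_range_map_map]
    exact pow_le_pow_left' LinearMap.map_le_range n
  exact h ⟨x, hx, rfl⟩

/-- The linear map `Λⁿf` induced on the `n`-th exterior power by an endomorphism `f`;
for `n = 2` this is the map `Λ : g ↦ Λ²g` of the paper. -/
noncomputable def expMap {V : Type*} [AddCommGroup V] [Module ℂ V] (n : ℕ) (f : V →ₗ[ℂ] V) :
    ⋀[ℂ]^n V →ₗ[ℂ] ⋀[ℂ]^n V :=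
  ((ExteriorAlgebra.map f).toLinearMap).restrict (fun _ hx => map_mem_exteriorPower f n hx)

instance {V : Type*} [AddCommGroup V] [Module ℂ V] (n : ℕ) [Module.Finite ℂ V] :
    Module.Finite ℂ (⋀[ℂ]^n V) :=
  Module.Finite.iff_fg.mpr
    ((Module.Finite.iff_fg.mp (Module.Finite.range (ι ℂ : V →ₗ[ℂ] ExteriorAlgebra ℂ V))).pow n)

section AuxWedge
variable {V : Type*} [AddCommGroup V] [Module ℂ V]

lemma ιMulti_two_eq (u v : V) : ιMulti ℂ 2 ![u, v] = ι ℂ u * ι ℂ v := by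
  simp [ιMulti_apply, List.ofFn_succ]

lemma wedge_mem (u v : V) : ι ℂ u * ι ℂ v ∈ ⋀[ℂ]^2 V := by
  rw [← ιMulti_two_eq]
  exact ιMulti_range ℂ 2 (Set.mem_range_self _)

lemma wedge_ne_zero {u x : V} (h : LinearIndependent ℂ ![u, x]) :
    ι ℂ u * ι ℂ x ≠ 0 := by
  classical
  set b := Basis.span h with hb
  obtain ⟨T, hT⟩ := LinearMap.exists_extend (b.equivFun).toLinearMap
  have hTv : ∀ i j : Fin 2, T (![u, x] i) j = if i = j then 1 else 0 := by
    intro i j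
    have h1 : (![u, x] i : V) = ((b i : Submodule.span ℂ (Set.range ![u, x])) : V) :=
      congrArg Subtype.val (Basis.span_apply h i).symm
    have h2 := LinearMap.congr_fun hT (b i)
    simp only [LinearMap.comp_apply, Submodule.subtype_apply, LinearEquiv.coe_toLinearMap] at h2
    rw [h1, h2, b.equivFun_self]
  set F := ((Pi.basisFun ℂ (Fin 2)).det).compLinearMap T with hF
  have hF1 : F ![u, x] = 1 := by
    rw [hF, AlternatingMap.compLinearMap_apply, Pi.basisFun_det]
    have : (fun i => T (![u, x] i)) = Matrix.of fun i j => if i = j then (1:ℂ) else 0 := by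
      funext i j
      exact hTv i j
    rw [this]
    show Matrix.det (Matrix.of fun i j => if i = j then (1:ℂ) else 0) = 1
    simp [Matrix.det_fin_two]
  intro hzero
  have hl := congrArg (liftAlternating
      (Function.update (fun i => (0 : V [⋀^Fin i]→ₗ[ℂ] ℂ)) 2 F)) (ιMulti_two_eq u x)
  rw [hzero, map_zero, liftAlternating_apply_ιMulti, Function.update_self, hF1] at hl
  exact one_ne_zero (α := ℂ) hl

lemma mem_span_of_wedge_eq_zero {u x : V} (hu : u ≠ 0) (hw : ι ℂ u * ι ℂ x = 0) :
    x ∈ Submodule.span ℂ {u} := by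
  by_contra hx
  refine wedge_ne_zero ((LinearIndependent.pair_iff' hu).mpr fun a ha => hx ?_) hw
  exact ha ▸ Submodule.smul_mem _ a (Submodule.mem_span_singleton_self u)

end AuxWedge

/-- A reflection: an endomorphism of finite order whose fixed-point space is a hyperplane. -/
def IsReflection {V : Type*} [AddCommGroup V] [Module ℂ V] (s : Module.End ℂ V) : Prop :=
  IsOfFinOrder s ∧ finrank ℂ (LinearMap.ker (s - 1)) = finrank ℂ V - 1

theorem stmt11 {V : Type*} [AddCommGroup V] [Module ℂ V] [FiniteDimensional ℂ V]
    (hV : finrank ℂ V = 4) (W : Subgroup (V ≃ₗ[ℂ] V)) [Finite W]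
    (s s' : V ≃ₗ[ℂ] V) (hsW : s ∈ W) (hs'W : s' ∈ W)
    (hs : IsReflection (s : V →ₗ[ℂ] V)) (hs' : IsReflection (s' : V →ₗ[ℂ] V))
    (h : LinearMap.det (s : V →ₗ[ℂ] V) • expMap 2 (s : V →ₗ[ℂ] V) =
      LinearMap.det (s' : V →ₗ[ℂ] V) • expMap 2 (s' : V →ₗ[ℂ] V)) :
    s = s' := by
  classical
  set H := LinearMap.ker ((s : V →ₗ[ℂ] V) - 1) with hH
  set H' := LinearMap.ker ((s' : V →ₗ[ℂ] V) - 1) with hH'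
  have key : ∀ a b : V,
      LinearMap.det (s : V →ₗ[ℂ] V) • (ι ℂ ((s : V →ₗ[ℂ] V) a) * ι ℂ ((s : V →ₗ[ℂ] V) b)) =
      LinearMap.det (s' : V →ₗ[ℂ] V) • (ι ℂ ((s' : V →ₗ[ℂ] V) a) * ι ℂ ((s' : V →ₗ[ℂ] V) b)) := by
    intro a b
    have h1 := congrArg Subtype.val (LinearMap.congr_fun h ⟨ι ℂ a * ι ℂ b, wedge_mem a b⟩)
    have h2 : LinearMap.det (s : V →ₗ[ℂ] V) • ExteriorAlgebra.map (s : V →ₗ[ℂ] V) (ι ℂ a * ι ℂ b) =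
        LinearMap.det (s' : V →ₗ[ℂ] V) • ExteriorAlgebra.map (s' : V →ₗ[ℂ] V) (ι ℂ a * ι ℂ b) := h1
    simpa [map_apply_ι] using h2
  -- two independent common fixed vectors
  have hdH : finrank ℂ H = 3 := by rw [hs.2, hV]
  have hdH' : finrank ℂ H' = 3 := by rw [hs'.2, hV]
  have hinf : 2 ≤ finrank ℂ ↥(H ⊓ H') := by
    have h1 := Submodule.finrank_sup_add_finrank_inf_eq H H'
    have h2 : finrank ℂ ↥(H ⊔ H') ≤ 4 := hV ▸ Submodule.finrank_le _
    omega
  obtain ⟨f, hf⟩ := exists_linearIndependent_of_le_finrank (R := ℂ) (M := ↥(H ⊓ H')) hinf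
  set u₁ : V := (f 0 : V) with hu₁
  set u₂ : V := (f 1 : V) with hu₂
  have hfixgen : ∀ (g : V ≃ₗ[ℂ] V) (u : V), u ∈ LinearMap.ker ((g : V →ₗ[ℂ] V) - 1) →
      (g : V →ₗ[ℂ] V) u = u := by
    intro g u hu
    have := LinearMap.mem_ker.mp hu
    rw [LinearMap.sub_apply, Module.End.one_apply, sub_eq_zero] at this
    exact this
  have hfs : ∀ i : Fin 2, (s : V →ₗ[ℂ] V) (f i : V) = (f i : V) :=
    fun i => hfixgen s _ (f i).2.1
  have hfs' : ∀ i : Fin 2, (s' : V →ₗ[ℂ] V) (f i : V) = (f i : V) :=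
    fun i => hfixgen s' _ (f i).2.2
  have hind : LinearIndependent ℂ ![u₁, u₂] := by
    have h2 := hf.map' (Submodule.subtype _) (Submodule.ker_subtype _)
    have h3 : (![u₁, u₂] : Fin 2 → V) = (Submodule.subtype (H ⊓ H')) ∘ f := by
      funext i; fin_cases i <;> rfl
    rwa [h3]
  have hu1ne : u₁ ≠ 0 := by
    have := hind.ne_zero 0
    simpa using this
  have hu2ne : u₂ ≠ 0 := by
    have := hind.ne_zero 1
    simpa using this
  have hdet : LinearMap.det (s : V →ₗ[ℂ] V) = LinearMap.det (s' : V →ₗ[ℂ] V) := by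
    have hk := key u₁ u₂
    rw [hfs 0, hfs 1, hfs' 0, hfs' 1] at hk
    have h0 : (LinearMap.det (s : V →ₗ[ℂ] V) - LinearMap.det (s' : V →ₗ[ℂ] V)) •
        (ι ℂ u₁ * ι ℂ u₂) = 0 := by
      rw [sub_smul, hk, sub_self]
    rcases smul_eq_zero.mp h0 with h1 | h1
    · exact sub_eq_zero.mp h1
    · exact absurd h1 (wedge_ne_zero hind)
  have hd0 : LinearMap.det (s' : V →ₗ[ℂ] V) ≠ 0 := s'.isUnit_det'.ne_zero
  -- pointwise agreement
  have main : ∀ v : V, (s : V →ₗ[ℂ] V) v = (s' : V →ₗ[ℂ] V) v := by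
    intro v
    have step : ∀ u : V, u ≠ 0 → (s : V →ₗ[ℂ] V) u = u → (s' : V →ₗ[ℂ] V) u = u →
        (s : V →ₗ[ℂ] V) v - (s' : V →ₗ[ℂ] V) v ∈ Submodule.span ℂ {u} := by
      intro u hu h1 h2
      have hk := key u v
      rw [h1, h2, hdet] at hk
      have hc : ι ℂ u * ι ℂ ((s : V →ₗ[ℂ] V) v) = ι ℂ u * ι ℂ ((s' : V →ₗ[ℂ] V) v) :=
        smul_right_injective _ hd0 hk
      have hz : ι ℂ u * ι ℂ ((s : V →ₗ[ℂ] V) v - (s' : V →ₗ[ℂ] V) v) = 0 := by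
        rw [map_sub, mul_sub, hc, sub_self]
      exact mem_span_of_wedge_eq_zero hu hz
    obtain ⟨c, hc⟩ := Submodule.mem_span_singleton.mp (step u₁ hu1ne (hfs 0) (hfs' 0))
    obtain ⟨d, hd⟩ := Submodule.mem_span_singleton.mp (step u₂ hu2ne (hfs 1) (hfs' 1))
    have hsum : c • u₁ + (-d) • u₂ = 0 := by
      rw [neg_smul, hc, hd]; abel
    have := (LinearIndependent.pair_iff.mp hind c (-d) hsum).1
    rw [this, zero_smul] at hc
    exact sub_eq_zero.mp hc.symm
  exact LinearEquiv.toLinearMap_injective (LinearMap.ext main)
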